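/- Let F_q be a finite field and let C be an [n,k]_q linear code with generator matrix G (a k×n matrix over F_q whose rows form a basis of C). Then there exists a permutation P of {1,...,n} such that the reduced row echelon form R of G·M_P (where M_P is the permutation matrix of P) has some row whose Hamming weight equals the minimum distance d(C) of C. -/

import Mathlib

/-- Hamming weight of a vector: the number of nonzero coordinates. -/
def hWt {F : Type*} [Zero F] [DecidableEq F] {n : ℕ} (v : Fin n → F) : ℕ :=
  (Finset.univ.filter fun i => v i ≠ 0).card

/-- `(i, j)` is a pivot position of `R`: the entry is nonzero and all entries
to its left in the same row vanish. -/
def IsPivot {F : Type*} [Zero F] {k n : ℕ} (R : Matrix (Fin k) (Fin n) F)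
    (i : Fin k) (j : Fin n) : Prop :=
  R i j ≠ 0 ∧ ∀ j' : Fin n, j' < j → R i j' = 0

/-- `R` is in reduced row echelon form. -/
def IsRREF {F : Type*} [Zero F] [One F] {k n : ℕ} (R : Matrix (Fin k) (Fin n) F) : Prop :=
  (∀ i i' : Fin k, i ≤ i' → R i = 0 → R i' = 0) ∧
  (∀ (i : Fin k) (j : Fin n), IsPivot R i j → R i j = 1) ∧
  (∀ (i i' : Fin k) (j j' : Fin n), i < i' → IsPivot R i j → IsPivot R i' j' → j < j') ∧
  (∀ (i : Fin k) (j : Fin n), IsPivot R i j → ∀ i' : Fin k, i' ≠ i → R i' j = 0)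

/-- Minimum distance of a linear code: minimal Hamming weight of a nonzero codeword. -/
noncomputable def minDist {F : Type*} [Field F] [DecidableEq F] {n : ℕ}
    (C : Submodule F (Fin n → F)) : ℕ :=
  sInf {d : ℕ | ∃ c ∈ C, c ≠ 0 ∧ hWt c = d}

private lemma hWt_comp_perm {F : Type*} [Zero F] [DecidableEq F] {n : ℕ}
    (v : Fin n → F) (e : Equiv.Perm (Fin n)) : hWt (fun j => v (e j)) = hWt v := by
  unfold hWt
  exact Finset.card_equiv e (fun i => by simp)

/-- For any generator matrix `G` of an `[n,k]_q` linear code `C`,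
there is a permutation `P` of the columns such that the reduced row echelon form of
`G·M_P` has a row whose Hamming weight equals the minimum distance of `C`. -/
theorem exists_perm_rref_row_weight_eq_minDist
    {F : Type*} [Field F] [Fintype F] [DecidableEq F] {n k : ℕ} (hk : 0 < k)
    (C : Submodule F (Fin n → F)) (G : Matrix (Fin k) (Fin n) F)
    (hGli : LinearIndependent F (fun i : Fin k => G i))
    (hGspan : Submodule.span F (Set.range fun i : Fin k => G i) = C) :
    ∃ P : Equiv.Perm (Fin n), ∀ R : Matrix (Fin k) (Fin n) F,
      IsRREF R →
      (∃ A : Matrix (Fin k) (Fin k) F, IsUnit A ∧ R = A * (G * P.permMatrix F)) →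
      ∃ i : Fin k, hWt (R i) = minDist C := by
  classical
  set d := minDist C with hd
  -- the minimum distance is achieved by some codeword `c`
  have hne : {m : ℕ | ∃ c ∈ C, c ≠ 0 ∧ hWt c = m}.Nonempty := by
    refine ⟨hWt (G ⟨0, hk⟩), G ⟨0, hk⟩, ?_, ?_, rfl⟩
    · rw [← hGspan]; exact Submodule.subset_span ⟨⟨0, hk⟩, rfl⟩
    · exact hGli.ne_zero ⟨0, hk⟩
  obtain ⟨c, hcC, hc0, hcw⟩ : ∃ c ∈ C, c ≠ 0 ∧ hWt c = d := Nat.sInf_mem hne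
  have hmin : ∀ v ∈ C, v ≠ 0 → d ≤ hWt v := fun v hv hv0 => Nat.sInf_le ⟨v, hv, hv0, rfl⟩
  have hdn : d ≤ n := by
    rw [← hcw]
    calc hWt c ≤ Finset.univ.card := Finset.card_filter_le _ _
      _ = n := Finset.card_fin n
  -- cardinality of the tail segment
  have hqcard : (Finset.univ.filter fun j : Fin n => n - d ≤ (j : ℕ)).card = d := by
    have h1 : (Finset.univ.filter fun j : Fin n => n - d ≤ (j : ℕ)).card
        = (Finset.Ico (n - d) n).card := by
      refine Finset.card_nbij (fun j => (j : ℕ)) ?_ ?_ ?_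
      · intro a ha
        simp only [Finset.coe_filter, Finset.mem_coe, Finset.mem_filter, Finset.mem_univ, true_and, Set.mem_setOf_eq] at ha
        simp only [Finset.coe_Ico, Finset.mem_coe, Set.mem_Ico]
        exact ⟨ha, a.isLt⟩
      · intro a _ b _ h
        exact Fin.val_injective h
      · intro m hm
        simp only [Finset.coe_filter, Finset.mem_Ico, Finset.mem_coe] at hm ⊢
        exact ⟨⟨m, hm.2⟩, by simp; omega, rfl⟩
    rw [h1, Nat.card_Ico]
    omega
  -- build the permutation sending the support of `c` to the last `d` positions
  set p : Fin n → Prop := fun j => c j ≠ 0 with hp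
  set q : Fin n → Prop := fun j => n - d ≤ (j : ℕ) with hq
  have hcards : Fintype.card {x // p x} = Fintype.card {x // q x} := by
    rw [Fintype.card_subtype, Fintype.card_subtype]
    exact hcw.trans hqcard.symm
  have hcards' : Fintype.card {x // ¬ p x} = Fintype.card {x // ¬ q x} := by
    rw [Fintype.card_subtype_compl p, Fintype.card_subtype_compl q, hcards]
  set e1 := Fintype.equivOfCardEq hcards with he1
  set e2 := Fintype.equivOfCardEq hcards' with he2
  set σ : Equiv.Perm (Fin n) :=
    (Equiv.sumCompl p).symm.trans ((e1.sumCongr e2).trans (Equiv.sumCompl q)) with hσdef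
  have hσ : ∀ x, p x ↔ q (σ x) := by
    intro x
    by_cases hx : p x
    · simp only [hσdef, Equiv.trans_apply]
      rw [Equiv.sumCompl_symm_apply_of_pos hx]
      simp only [Equiv.sumCongr_apply, Sum.map_inl, Equiv.sumCompl_apply_inl]
      exact iff_of_true hx (e1 ⟨x, hx⟩).2
    · simp only [hσdef, Equiv.trans_apply]
      rw [Equiv.sumCompl_symm_apply_of_neg hx]
      simp only [Equiv.sumCongr_apply, Sum.map_inr, Equiv.sumCompl_apply_inr]
      exact iff_of_false hx (e2 ⟨x, hx⟩).2
  have hsupp : ∀ j : Fin n, c (σ.symm j) ≠ 0 ↔ n - d ≤ (j : ℕ) := by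
    intro j
    have := hσ (σ.symm j)
    rwa [Equiv.apply_symm_apply] at this
  refine ⟨σ, ?_⟩
  rintro R hRREF ⟨A, hA, hRdef⟩
  obtain ⟨-, hR1, -, hR4⟩ := hRREF
  obtain ⟨u, hu⟩ := hA
  set A' : Matrix (Fin k) (Fin k) F := ↑u⁻¹ with hA'
  have hA'A : A' * A = 1 := by rw [hA', ← hu]; exact u.inv_mul
  have hG'app : ∀ i j, (G * σ.permMatrix F) i j = G i (σ.symm j) := by
    intro i j
    rw [Equiv.Perm.permMatrix, PEquiv.mul_toMatrix_toPEquiv]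
    rfl
  have hG' : A' * R = G * σ.permMatrix F := by
    rw [hRdef, ← Matrix.mul_assoc, hA'A, Matrix.one_mul]
  rw [← hGspan] at hcC
  obtain ⟨y, hy⟩ := (Submodule.mem_span_range_iff_exists_fun F).mp hcC
  set x : Fin k → F := fun l => ∑ m, y m * A' m l with hx
  have hc' : ∀ j, c (σ.symm j) = ∑ l, x l * R l j := by
    intro j
    have h1 : c (σ.symm j) = ∑ i, y i * (G * σ.permMatrix F) i j := by
      rw [← hy]
      simp [Finset.sum_apply, hG'app, smul_eq_mul]
    rw [h1, ← hG']
    calc ∑ i, y i * (A' * R) i j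
        = ∑ i, ∑ l, y i * A' i l * R l j := by
          simp [Matrix.mul_apply, Finset.mul_sum, mul_assoc]
      _ = ∑ l, ∑ i, y i * A' i l * R l j := Finset.sum_comm
      _ = ∑ l, x l * R l j := by simp [hx, Finset.sum_mul]
  have hpivotval : ∀ (l : Fin k) (jl : Fin n), IsPivot R l jl → c (σ.symm jl) = x l := by
    intro l jl hpiv
    rw [hc' jl, Finset.sum_eq_single l]
    · rw [hR1 l jl hpiv, mul_one]
    · intro m _ hm
      rw [hR4 l jl hpiv m hm, mul_zero]
    · intro h
      exact absurd (Finset.mem_univ l) h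
  -- there is a pivot in the last d columns
  have hex : ∃ (i : Fin k) (j : Fin n), IsPivot R i j ∧ n - d ≤ (j : ℕ) := by
    by_contra hcon
    push_neg at hcon
    have hzero : ∀ l : Fin k, x l = 0 ∨ R l = 0 := by
      intro l
      by_cases h : R l = 0
      · exact Or.inr h
      · left
        have hs : (Finset.univ.filter fun j => R l j ≠ 0).Nonempty := by
          rcases Function.ne_iff.mp h with ⟨j, hj⟩
          exact ⟨j, by simpa using hj⟩
        set jl := (Finset.univ.filter fun j => R l j ≠ 0).min' hs with hjl
        have hjlmem := (Finset.univ.filter fun j => R l j ≠ 0).min'_mem hs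
        simp only [Finset.mem_filter, Finset.mem_univ, true_and] at hjlmem
        have hpiv : IsPivot R l jl := by
          refine ⟨hjlmem, fun j' hj' => ?_⟩
          by_contra hne0
          have : jl ≤ j' := Finset.min'_le _ _ (by simp [hne0])
          exact absurd hj' (not_lt.mpr this)
        have hlt := hcon l jl hpiv
        have : c (σ.symm jl) = 0 := by
          by_contra hne0
          exact absurd ((hsupp jl).mp hne0) (not_le.mpr hlt)
        rw [hpivotval l jl hpiv] at this
        exact this
    have : c = 0 := by
      funext i0
      have h1 : c (σ.symm (σ i0)) = 0 := by
        rw [hc' (σ i0)]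
        apply Finset.sum_eq_zero
        intro l _
        rcases hzero l with h | h
        · rw [h, zero_mul]
        · rw [h]; simp
      rwa [Equiv.symm_apply_apply] at h1
    exact hc0 this
  obtain ⟨i, j, hpiv, hj⟩ := hex
  refine ⟨i, ?_⟩
  -- the row `R i` is a permuted codeword
  have hRrow : ∀ j', R i j' = (∑ m, A i m • G m) (σ.symm j') := by
    intro j'
    rw [hRdef]
    simp [Matrix.mul_apply, hG'app, Finset.sum_apply, smul_eq_mul]
  set v : Fin n → F := ∑ m, A i m • G m with hv
  have hvC : v ∈ C := by
    rw [← hGspan]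
    exact Submodule.sum_mem _ fun m _ =>
      Submodule.smul_mem _ _ (Submodule.subset_span ⟨m, rfl⟩)
  have hRv : R i = fun j' => v (σ.symm j') := funext hRrow
  have hwt_eq : hWt (R i) = hWt v := by
    rw [hRv]
    exact hWt_comp_perm v σ.symm
  have hv0 : v ≠ 0 := by
    intro h0
    apply hpiv.1
    rw [hRrow j, h0]
    rfl
  have hge : d ≤ hWt (R i) := hwt_eq ▸ hmin v hvC hv0
  have hle : hWt (R i) ≤ d := by
    have hsub : (Finset.univ.filter fun j' => R i j' ≠ 0)
        ⊆ (Finset.univ.filter fun j' : Fin n => n - d ≤ (j' : ℕ)) := by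
      intro a ha
      simp only [Finset.mem_filter, Finset.mem_univ, true_and] at ha ⊢
      by_contra hlt
      push_neg at hlt
      have hav : a < j := Fin.lt_def.mpr (lt_of_lt_of_le hlt hj)
      exact ha (hpiv.2 a hav)
    calc hWt (R i) ≤ _ := Finset.card_le_card hsub
      _ = d := hqcard
  omega
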